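/- Let μ be a finite positive Borel measure on [0,1) and s > 0. If μ is an s-Carleson measure, i.e. sup_{t∈[0,1)} μ([t,1))/(1-t)^s < ∞, then the sequence of moments μ_n = ∫_{[0,1)} t^n dμ(t) satisfies sup_{n≥0} (1+n)^s μ_n < ∞. -/

import Mathlib

open MeasureTheory Set Metric Complex

/-- For `x ≥ 0` and `s > 0`, `x ^ s ≤ (2*s)^s * exp (x/2)`. -/
lemma aux_rpow_le_exp_half (s : ℝ) (hs : 0 < s) (x : ℝ) (hx : 0 ≤ x) :
    x ^ s ≤ (2 * s) ^ s * Real.exp (x / 2) := by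
  set u : ℝ := x / (2 * s) with hu_def
  have h2s : (0:ℝ) < 2 * s := by linarith
  have hu : 0 ≤ u := div_nonneg hx h2s.le
  have hxu : x = 2 * s * u := by rw [hu_def, mul_div_assoc', mul_div_cancel_left₀ x h2s.ne']
  have hue : u ≤ Real.exp u := by
    have := Real.add_one_le_exp u; linarith
  have h1 : x ^ s = (2 * s) ^ s * u ^ s := by
    rw [hxu, Real.mul_rpow h2s.le hu]
  have h2 : u ^ s ≤ (Real.exp u) ^ s :=
    Real.rpow_le_rpow hu hue hs.le
  have h3 : (Real.exp u) ^ s = Real.exp (x / 2) := by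
    rw [Real.rpow_def_of_pos (Real.exp_pos u), Real.log_exp]
    congr 1
    rw [hxu]; ring
  rw [h1]
  calc (2 * s) ^ s * u ^ s ≤ (2 * s) ^ s * (Real.exp u) ^ s := by
        exact mul_le_mul_of_nonneg_left h2 (Real.rpow_nonneg h2s.le s)
    _ = (2 * s) ^ s * Real.exp (x / 2) := by rw [h3]

theorem moments_of_carleson (μ : Measure ℝ) [IsFiniteMeasure μ] (s : ℝ) (hs : 0 < s)
    (hcar : ∃ C : ℝ, ∀ t ∈ Set.Ico (0:ℝ) 1, (μ (Set.Ico t 1)).toReal ≤ C * (1 - t) ^ s) :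
    ∃ C : ℝ, ∀ n : ℕ, ((1:ℝ) + n) ^ s * (∫ t in Set.Ico (0:ℝ) 1, t ^ n ∂μ) ≤ C := by
  obtain ⟨C, hC⟩ := hcar
  have hC0 : 0 ≤ C := by
    have h := hC 0 ⟨le_refl 0, one_pos⟩
    simp only [sub_zero, Real.one_rpow, mul_one] at h
    exact le_trans ENNReal.toReal_nonneg h
  set K : ℝ := C * (2 * s) ^ s * 2 with hK_def
  have hK0 : 0 ≤ K := by positivity
  refine ⟨max ((μ (Set.Ico (0:ℝ) 1)).toReal) ((2:ℝ) ^ s * K), fun n => ?_⟩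
  rcases Nat.eq_zero_or_pos n with hn | hn
  · subst hn
    simp only [Nat.cast_zero, add_zero, Real.one_rpow, pow_zero, one_mul]
    have : (∫ t in Set.Ico (0:ℝ) 1, (1:ℝ) ∂μ) = (μ (Set.Ico (0:ℝ) 1)).toReal := by
      simp [measureReal_def]
    rw [this]
    exact le_max_left _ _
  -- now n ≥ 1
  have hn0 : (n:ℝ) ≠ 0 := Nat.cast_ne_zero.mpr hn.ne'
  have hnpos : (0:ℝ) < n := Nat.cast_pos.mpr hn
  set r : ℝ := (n : ℝ)⁻¹ with hr_def
  have hr0 : 0 < r := inv_pos.mpr hnpos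
  set ν : Measure ℝ := μ.restrict (Set.Ico (0:ℝ) 1) with hν_def
  -- step 1: write the integral via lintegral
  have hnn : 0 ≤ᵐ[ν] fun t : ℝ => t ^ n := by
    filter_upwards [ae_restrict_mem measurableSet_Ico] with t ht
    exact pow_nonneg ht.1 n
  have hmble : AEMeasurable (fun t : ℝ => t ^ n) ν :=
    (measurable_id.pow_const n).aemeasurable
  have hI : (∫ t in Set.Ico (0:ℝ) 1, t ^ n ∂μ)
      = (∫⁻ t, ENNReal.ofReal (t ^ n) ∂ν).toReal := by
    rw [integral_eq_lintegral_of_nonneg_ae hnn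
      ((measurable_id.pow_const n).aestronglyMeasurable)]
  -- layer cake
  have hLC : (∫⁻ t, ENNReal.ofReal (t ^ n) ∂ν)
      = ∫⁻ t in Set.Ioi (0:ℝ), ν {a : ℝ | t < a ^ n} :=
    lintegral_eq_lintegral_meas_lt ν hnn hmble
  -- pointwise bound on (0,1]
  have hpt : ∀ t ∈ Set.Ioc (0:ℝ) 1,
      ν {a : ℝ | t < a ^ n} ≤ ENNReal.ofReal (C * (2*s)^s * r ^ s * t ^ (-(2:ℝ)⁻¹)) := by
    intro t ht
    have hrw : ν {a : ℝ | t < a ^ n} = μ ({a : ℝ | t < a ^ n} ∩ Set.Ico 0 1) :=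
      Measure.restrict_apply' measurableSet_Ico
    rcases eq_or_lt_of_le ht.2 with h1 | h1
    · -- t = 1 : the set is empty
      have : {a : ℝ | t < a ^ n} ∩ Set.Ico (0:ℝ) 1 = ∅ := by
        ext a
        simp only [Set.mem_inter_iff, Set.mem_setOf_eq, Set.mem_Ico, Set.mem_empty_iff_false,
          iff_false, not_and, and_imp]
        intro hta ha0 ha1
        have : a ^ n < 1 := pow_lt_one₀ ha0 ha1 hn.ne'
        linarith
      rw [hrw, this]
      simp
    -- t < 1
    have htr_lt : t ^ r < 1 := Real.rpow_lt_one ht.1.le h1 hr0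
    have htr_nn : 0 ≤ t ^ r := Real.rpow_nonneg ht.1.le r
    have hsub : {a : ℝ | t < a ^ n} ∩ Set.Ico (0:ℝ) 1 ⊆ Set.Ico (t ^ r) 1 := by
      rintro a ⟨hta, ha0, ha1⟩
      refine ⟨?_, ha1⟩
      by_contra hcon
      push_neg at hcon
      have : a ^ n < (t ^ r) ^ n := pow_lt_pow_left₀ hcon ha0 hn.ne'
      rw [hr_def, Real.rpow_inv_natCast_pow ht.1.le hn.ne'] at this
      exact absurd hta (not_lt.mpr this.le)
    have hmeas : μ ({a : ℝ | t < a ^ n} ∩ Set.Ico 0 1) ≤ μ (Set.Ico (t ^ r) 1) :=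
      measure_mono hsub
    have hcarl : μ (Set.Ico (t ^ r) 1) ≤ ENNReal.ofReal (C * (1 - t ^ r) ^ s) := by
      have hb := hC (t ^ r) ⟨htr_nn, htr_lt⟩
      have hbnn : 0 ≤ C * (1 - t ^ r) ^ s :=
        mul_nonneg hC0 (Real.rpow_nonneg (by linarith) s)
      rw [ENNReal.le_ofReal_iff_toReal_le (measure_ne_top μ _) hbnn]
      exact hb
    -- real-number estimate
    have hreal : C * (1 - t ^ r) ^ s ≤ C * (2*s)^s * r ^ s * t ^ (-(2:ℝ)⁻¹) := by
      have hlog_nonpos : Real.log t ≤ 0 := Real.log_nonpos ht.1.le ht.2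
      have hml : 0 ≤ -Real.log t := by linarith
      have hbase : 1 - t ^ r ≤ -Real.log t * r := by
        have hexp : t ^ r = Real.exp (Real.log t * r) := Real.rpow_def_of_pos ht.1 r
        have := Real.add_one_le_exp (Real.log t * r)
        rw [← hexp] at this
        nlinarith
      have hbase_nn : 0 ≤ 1 - t ^ r := by linarith
      have h1' : (1 - t ^ r) ^ s ≤ (-Real.log t * r) ^ s :=
        Real.rpow_le_rpow hbase_nn hbase hs.le
      have h2' : (-Real.log t * r) ^ s = (-Real.log t) ^ s * r ^ s :=
        Real.mul_rpow hml hr0.le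
      have h3' : (-Real.log t) ^ s ≤ (2*s)^s * Real.exp (-Real.log t / 2) :=
        aux_rpow_le_exp_half s hs _ hml
      have h4' : Real.exp (-Real.log t / 2) = t ^ (-(2:ℝ)⁻¹) := by
        rw [Real.rpow_def_of_pos ht.1]
        congr 1
        ring
      calc C * (1 - t ^ r) ^ s ≤ C * ((-Real.log t) ^ s * r ^ s) := by
            rw [← h2']
            exact mul_le_mul_of_nonneg_left h1' hC0
        _ ≤ C * (((2*s)^s * Real.exp (-Real.log t / 2)) * r ^ s) := by
            apply mul_le_mul_of_nonneg_left _ hC0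
            exact mul_le_mul_of_nonneg_right h3' (Real.rpow_nonneg hr0.le s)
        _ = C * (2*s)^s * r ^ s * t ^ (-(2:ℝ)⁻¹) := by
            rw [h4']; ring
    calc ν {a : ℝ | t < a ^ n} = μ ({a : ℝ | t < a ^ n} ∩ Set.Ico 0 1) := hrw
      _ ≤ μ (Set.Ico (t ^ r) 1) := hmeas
      _ ≤ ENNReal.ofReal (C * (1 - t ^ r) ^ s) := hcarl
      _ ≤ ENNReal.ofReal (C * (2*s)^s * r ^ s * t ^ (-(2:ℝ)⁻¹)) :=
          ENNReal.ofReal_le_ofReal hreal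
  -- the set is empty for t > 1
  have hIoi1 : ∀ t ∈ Set.Ioi (1:ℝ), ν {a : ℝ | t < a ^ n} = 0 := by
    intro t ht
    rw [Measure.restrict_apply' measurableSet_Ico]
    have hempty : {a : ℝ | t < a ^ n} ∩ Set.Ico (0:ℝ) 1 = ∅ := by
      ext a
      simp only [Set.mem_inter_iff, Set.mem_setOf_eq, Set.mem_Ico, Set.mem_empty_iff_false,
        iff_false, not_and, and_imp]
      intro hta ha0 ha1
      have h1 : a ^ n < 1 := pow_lt_one₀ ha0 ha1 hn.ne'
      have h2 : (1:ℝ) < t := ht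
      linarith
    rw [hempty]; simp
  -- split the domain
  have hsplit : (∫⁻ t in Set.Ioi (0:ℝ), ν {a : ℝ | t < a ^ n})
      = (∫⁻ t in Set.Ioc (0:ℝ) 1, ν {a : ℝ | t < a ^ n})
        + ∫⁻ t in Set.Ioi (1:ℝ), ν {a : ℝ | t < a ^ n} := by
    rw [← lintegral_union measurableSet_Ioi
      (Set.disjoint_left.mpr fun x hx hx' => absurd hx.2 (not_le.mpr hx')),
      Set.Ioc_union_Ioi_eq_Ioi zero_le_one]
  have hzero : (∫⁻ t in Set.Ioi (1:ℝ), ν {a : ℝ | t < a ^ n}) = 0 := by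
    rw [setLIntegral_congr_fun measurableSet_Ioi (show EqOn (fun t => ν {a : ℝ | t < a ^ n}) (fun _ => 0) (Set.Ioi 1) from hIoi1)]
    simp
  set K1 : ℝ := C * (2*s)^s * r ^ s with hK1_def
  have hK1 : 0 ≤ K1 := by positivity
  -- bound on (0,1]
  have hmono : (∫⁻ t in Set.Ioc (0:ℝ) 1, ν {a : ℝ | t < a ^ n})
      ≤ ∫⁻ t in Set.Ioc (0:ℝ) 1, ENNReal.ofReal (K1 * t ^ (-(2:ℝ)⁻¹)) :=
    setLIntegral_mono' measurableSet_Ioc hpt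
  -- compute the rpow integral
  have hint : IntegrableOn (fun t : ℝ => t ^ (-(2:ℝ)⁻¹)) (Set.Ioc 0 1) :=
    (intervalIntegral.intervalIntegrable_rpow' (by norm_num)).1
  have hval : (∫ t in Set.Ioc (0:ℝ) 1, t ^ (-(2:ℝ)⁻¹)) = 2 := by
    rw [← intervalIntegral.integral_of_le zero_le_one,
      integral_rpow (Or.inl (by norm_num))]
    rw [Real.one_rpow, Real.zero_rpow (by norm_num : -(2:ℝ)⁻¹ + 1 ≠ 0)]
    norm_num
  have hlin : (∫⁻ t in Set.Ioc (0:ℝ) 1, ENNReal.ofReal (t ^ (-(2:ℝ)⁻¹)))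
      = ENNReal.ofReal 2 := by
    rw [← ofReal_integral_eq_lintegral_ofReal hint
      (by filter_upwards [ae_restrict_mem measurableSet_Ioc] with t ht
          exact Real.rpow_nonneg ht.1.le _), hval]
  have hconst : (∫⁻ t in Set.Ioc (0:ℝ) 1, ENNReal.ofReal (K1 * t ^ (-(2:ℝ)⁻¹)))
      = ENNReal.ofReal K1 * ENNReal.ofReal 2 := by
    simp_rw [ENNReal.ofReal_mul hK1]
    rw [lintegral_const_mul' _ _ ENNReal.ofReal_ne_top, hlin]
  -- put the lintegral bound together
  have hL : (∫⁻ t, ENNReal.ofReal (t ^ n) ∂ν) ≤ ENNReal.ofReal (K1 * 2) := by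
    rw [hLC, hsplit, hzero, add_zero]
    calc (∫⁻ t in Set.Ioc (0:ℝ) 1, ν {a : ℝ | t < a ^ n})
        ≤ ∫⁻ t in Set.Ioc (0:ℝ) 1, ENNReal.ofReal (K1 * t ^ (-(2:ℝ)⁻¹)) := hmono
      _ = ENNReal.ofReal K1 * ENNReal.ofReal 2 := hconst
      _ = ENNReal.ofReal (K1 * 2) := (ENNReal.ofReal_mul hK1).symm
  have hIle : (∫ t in Set.Ico (0:ℝ) 1, t ^ n ∂μ) ≤ K1 * 2 := by
    rw [hI]
    calc (∫⁻ t, ENNReal.ofReal (t ^ n) ∂ν).toReal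
        ≤ (ENNReal.ofReal (K1 * 2)).toReal :=
          ENNReal.toReal_mono ENNReal.ofReal_ne_top hL
      _ = K1 * 2 := ENNReal.toReal_ofReal (by positivity)
  -- final arithmetic
  have h1n : (0:ℝ) ≤ 1 + n := by positivity
  have hfact : ((1:ℝ) + n) ^ s * r ^ s ≤ (2:ℝ) ^ s := by
    rw [← Real.mul_rpow h1n hr0.le]
    apply Real.rpow_le_rpow (by positivity) _ hs.le
    have h1le : (1:ℝ) ≤ n := Nat.one_le_cast.mpr hn
    rw [hr_def, mul_inv_le_iff₀ hnpos]
    linarith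
  calc ((1:ℝ) + n) ^ s * (∫ t in Set.Ico (0:ℝ) 1, t ^ n ∂μ)
      ≤ ((1:ℝ) + n) ^ s * (K1 * 2) :=
        mul_le_mul_of_nonneg_left hIle (Real.rpow_nonneg h1n s)
    _ = (((1:ℝ) + n) ^ s * r ^ s) * (C * (2*s)^s * 2) := by
        rw [hK1_def]; ring
    _ ≤ (2:ℝ) ^ s * (C * (2*s)^s * 2) :=
        mul_le_mul_of_nonneg_right hfact (by positivity)
    _ = (2:ℝ) ^ s * K := by rw [hK_def]
    _ ≤ max ((μ (Set.Ico (0:ℝ) 1)).toReal) ((2:ℝ) ^ s * K) := le_max_right _ _
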